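/- Let 0 → K → ℤ^m → A → 0 be a short exact sequence of abelian groups with A finite. Then the restriction map Hom(ℤ^m, ℤ) → Hom(K, ℤ) (precomposition with the inclusion K ↪ ℤ^m) is injective, and its cokernel is isomorphic to A. -/

import Mathlib

/-- The restriction map `Hom(ℤ^m, ℤ) → Hom(K, ℤ)` given by precomposition with the
inclusion of the kernel `K = ker f`. -/
def restrictionToKernel {m : ℕ} {A : Type*} [AddCommGroup A] (f : (Fin m → ℤ) →+ A) :
    ((Fin m → ℤ) →+ ℤ) →+ ((AddMonoidHom.ker f) →+ ℤ) :=
  AddMonoidHom.mk' (fun φ => φ.comp (AddMonoidHom.ker f).subtype)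
    (fun φ ψ => by ext x; rfl)

/-- For a short exact sequence `0 → K → ℤ^m → A → 0` with `A` finite, the
restriction map `Hom(ℤ^m, ℤ) → Hom(K, ℤ)` is injective, and its cokernel is isomorphic
to `A`. -/
theorem restriction_injective_and_cokernel_iso
    {m : ℕ} {A : Type*} [AddCommGroup A] [Finite A]
    (f : (Fin m → ℤ) →+ A) (hf : Function.Surjective f) :
    Function.Injective (restrictionToKernel f) ∧
    Nonempty ((((AddMonoidHom.ker f) →+ ℤ) ⧸ (restrictionToKernel f).range) ≃+ A) := by
  classical
  set K := AddMonoidHom.ker f with hKdef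
  have hsmul : ∀ x : Fin m → ℤ, (Nat.card A) • x ∈ K := by
    intro x
    simp only [hKdef, AddMonoidHom.mem_ker, map_nsmul]
    exact card_nsmul_eq_zero'
  have hcard : (Nat.card A : ℤ) ≠ 0 := by exact_mod_cast Nat.card_pos.ne'
  constructor
  · rw [injective_iff_map_eq_zero]
    intro φ hφ
    refine AddMonoidHom.ext fun x => ?_
    have h0 : φ ((Nat.card A) • x) = 0 :=
      congrArg (fun g : K →+ ℤ => g ⟨_, hsmul x⟩) hφ
    rw [map_nsmul, nsmul_eq_mul] at h0
    simpa [hcard, (Nat.card_pos (α := A)).ne'] using (mul_eq_zero.mp h0)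
  · obtain ⟨n, snf⟩ :=
      (AddSubgroup.toIntSubmodule K).smithNormalForm (Pi.basisFun ℤ (Fin m))
    set N : Submodule ℤ (Fin m → ℤ) := AddSubgroup.toIntSubmodule K with hN
    have memK : ∀ v : N, (v : Fin m → ℤ) ∈ K := fun v => v.2
    have memN : ∀ x : Fin m → ℤ, x ∈ K → x ∈ N := fun x hx => hx
    -- the embedding is surjective
    have hfsurj : Function.Surjective snf.f := by
      intro i
      by_contra hi
      have hrange : i ∉ Set.range snf.f := by simpa [Set.mem_range] using hi
      have hker : ∀ x ∈ K, snf.bM.coord i x = 0 := fun x hx =>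
        LinearMap.mem_ker.mp (snf.le_ker_coord_of_notMem_range hrange (memN x hx))
      set g : A → ℤ := fun a => snf.bM.coord i (Classical.choose (hf a)) with hg
      have hgx : ∀ x : Fin m → ℤ, snf.bM.coord i x = g (f x) := by
        intro x
        have hc := Classical.choose_spec (hf (f x))
        have hxc : x - Classical.choose (hf (f x)) ∈ K := by
          simp [hKdef, AddMonoidHom.mem_ker, map_sub, hc]
        have := hker _ hxc
        rw [map_sub] at this
        have := sub_eq_zero.mp this
        simpa [hg] using this
      have hfin : (Set.range (snf.bM.coord i)).Finite :=
        Set.Finite.subset (Set.finite_range g)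
          (by rintro _ ⟨x, rfl⟩; exact ⟨f x, (hgx x).symm⟩)
      have huniv : (Set.univ : Set ℤ) ⊆ Set.range (snf.bM.coord i) := by
        intro c _
        refine ⟨c • snf.bM i, ?_⟩
        rw [map_smul, Module.Basis.coord_apply, Module.Basis.repr_self]
        simp
      exact Set.infinite_univ (hfin.subset huniv)
    have hbij : Function.Bijective snf.f := ⟨snf.f.injective, hfsurj⟩
    set e : Fin n ≃ Fin m := Equiv.ofBijective snf.f hbij with he
    have hei : ∀ i, e i = snf.f i := fun i => rfl
    -- membership characterization
    have hmem : ∀ x : Fin m → ℤ, x ∈ K ↔ ∀ i, snf.a i ∣ snf.bM.repr x (snf.f i) := by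
      intro x
      constructor
      · intro hx i
        have h1 := snf.repr_apply_embedding_eq_repr_smul (⟨x, memN x hx⟩ : N) (i := i)
        rw [h1, map_smul]
        exact dvd_mul_right _ _
      · intro hdvd
        choose c hc using hdvd
        have hx : x = ∑ i, c i • (snf.bN i : Fin m → ℤ) := by
          refine snf.bM.ext_elem fun j => ?_
          obtain ⟨i, rfl⟩ := hfsurj j
          rw [hc i]
          rw [map_sum]
          simp only [map_smul, snf.snf, Finsupp.coe_finset_sum, Finset.sum_apply,
            Finsupp.coe_smul, Pi.smul_apply, Module.Basis.repr_self, smul_eq_mul]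
          rw [Finset.sum_eq_single i]
          · simp [mul_comm]
          · intro b _ hb
            simp [Finsupp.single_apply, hb, snf.f.injective.ne hb]
          · simp
        rw [hx]
        exact Submodule.sum_mem N fun i _ => Submodule.smul_mem N _ (snf.bN i).2
    -- target group
    have ha : ∀ i, snf.a i ≠ 0 := by
      intro i h
      refine snf.bN.ne_zero i (Subtype.coe_injective ?_)
      show ((snf.bN i : N) : Fin m → ℤ) = ((0 : N) : Fin m → ℤ)
      rw [snf.snf i, h, zero_smul, ZeroMemClass.coe_zero]
    -- Ψ : ℤ^m → ∏ ℤ/(a i)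
    set Ψ : (Fin m → ℤ) →+ (∀ i : Fin n, ℤ ⧸ AddSubgroup.zmultiples (snf.a i)) :=
      AddMonoidHom.mk' (fun x i => QuotientAddGroup.mk (snf.bM.repr x (snf.f i)))
        (fun x y => by funext i; simp) with hΨ
    have hΨapp : ∀ x i, Ψ x i = QuotientAddGroup.mk (snf.bM.repr x (snf.f i)) :=
      fun x i => rfl
    have hΨs : Function.Surjective Ψ := by
      intro t
      choose r hr using fun i => QuotientAddGroup.mk_surjective (t i)
      refine ⟨∑ i, r i • snf.bM (snf.f i), ?_⟩
      funext i
      rw [hΨapp]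
      have : snf.bM.repr (∑ i', r i' • snf.bM (snf.f i')) (snf.f i) = r i := by
        rw [map_sum]
        simp only [map_smul, Module.Basis.repr_self, Finsupp.coe_finset_sum, Finset.sum_apply,
          Finsupp.coe_smul, Pi.smul_apply, smul_eq_mul]
        rw [Finset.sum_eq_single i]
        · simp [Finsupp.single_apply]
        · intro b _ hb
          simp [Finsupp.single_apply, snf.f.injective.ne hb]
        · simp
      rw [this, hr i]
    have hkerΨ : Ψ.ker = K := by
      ext x
      simp only [AddMonoidHom.mem_ker]
      rw [funext_iff, hmem x]
      refine forall_congr' fun i => ?_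
      rw [hΨapp, Pi.zero_apply, QuotientAddGroup.eq_zero_iff, Int.mem_zmultiples_iff]
    have iso1 : A ≃+ (∀ i : Fin n, ℤ ⧸ AddSubgroup.zmultiples (snf.a i)) :=
      (QuotientAddGroup.quotientKerEquivOfSurjective f hf).symm.trans
        ((QuotientAddGroup.quotientAddEquivOfEq (hkerΨ.symm : K = Ψ.ker)).trans
          (QuotientAddGroup.quotientKerEquivOfSurjective Ψ hΨs))
    -- conversions between K and N
    set toK : N →+ K := AddMonoidHom.mk' (fun v => ⟨v, memK v⟩)
      (fun v w => Subtype.ext rfl) with htoK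
    set toN : K →+ N := AddMonoidHom.mk' (fun v => ⟨v, memN v v.2⟩)
      (fun v w => Subtype.ext rfl) with htoN
    have htoKN : ∀ v : N, toN (toK v) = v := fun v => Subtype.ext rfl
    have htoNK : ∀ v : K, toK (toN v) = v := fun v => Subtype.ext rfl
    -- Φ : Hom(K, ℤ) → ∏ ℤ/(a i)
    set Φ : (K →+ ℤ) →+ (∀ i : Fin n, ℤ ⧸ AddSubgroup.zmultiples (snf.a i)) :=
      AddMonoidHom.mk' (fun ψ i => QuotientAddGroup.mk (ψ (toK (snf.bN i))))
        (fun ψ χ => by funext i; simp) with hΦ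
    have hΦapp : ∀ (ψ : K →+ ℤ) i, Φ ψ i = QuotientAddGroup.mk (ψ (toK (snf.bN i))) :=
      fun ψ i => rfl
    have hΦs : Function.Surjective Φ := by
      intro t
      choose r hr using fun i => QuotientAddGroup.mk_surjective (t i)
      refine ⟨((snf.bN.constr ℤ r).toAddMonoidHom).comp toN, ?_⟩
      funext i
      rw [hΦapp]
      simp only [AddMonoidHom.comp_apply, LinearMap.toAddMonoidHom_coe, htoKN]
      rw [Module.Basis.constr_basis, hr i]
    have hrestr : ∀ (φ : (Fin m → ℤ) →+ ℤ) (k : K),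
        restrictionToKernel f φ k = φ (k : Fin m → ℤ) := fun φ k => rfl
    have hkerΦ : Φ.ker = (restrictionToKernel f).range := by
      ext ψ
      simp only [AddMonoidHom.mem_ker, AddMonoidHom.mem_range]
      rw [funext_iff]
      simp only [hΦapp, Pi.zero_apply, QuotientAddGroup.eq_zero_iff, Int.mem_zmultiples_iff]
      constructor
      · intro hdvd
        choose c hc using hdvd
        refine ⟨(snf.bM.constr ℤ (fun j => c (e.symm j))).toAddMonoidHom, ?_⟩
        have hL : ((snf.bM.constr ℤ (fun j => c (e.symm j))).comp N.subtype)
            = (ψ.comp toK).toIntLinearMap := by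
          apply snf.bN.ext
          intro i
          simp only [LinearMap.comp_apply, Submodule.coe_subtype,
            AddMonoidHom.coe_toIntLinearMap, AddMonoidHom.comp_apply]
          rw [snf.snf i, map_smul, Module.Basis.constr_basis]
          have h2 : e.symm (snf.f i) = i := e.symm_apply_eq.mpr rfl
          rw [h2, hc i, smul_eq_mul]
        ext k
        rw [hrestr]
        have := congrArg (fun L : N →ₗ[ℤ] ℤ => L (toN k)) hL
        simp only [LinearMap.comp_apply, Submodule.coe_subtype,
          AddMonoidHom.coe_toIntLinearMap, AddMonoidHom.comp_apply, htoNK] at this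
        exact this
      · rintro ⟨φ, rfl⟩ i
        rw [hrestr]
        have : ((toK (snf.bN i) : K) : Fin m → ℤ) = snf.a i • snf.bM (snf.f i) := snf.snf i
        rw [this, map_zsmul, smul_eq_mul]
        exact dvd_mul_right _ _
    exact ⟨((QuotientAddGroup.quotientAddEquivOfEq hkerΦ.symm).trans
      (QuotientAddGroup.quotientKerEquivOfSurjective Φ hΦs)).trans iso1.symm⟩
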